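/- Let E_1 ∈ ℱ_1, let E_2 ⊆ [0,1]×Ω be measurable and non-anticipative, let P ∈ 𝒬^E and let τ ∈ 𝒯^P. Let μ be the pushforward of P under the map ω ↦ (τ(ω), ω) from Ω to Ω̄. Then μ ∈ 𝒬̄^E, and for every measurable non-anticipative Z : [0,1]×Ω → ℝ that is bounded from below, ∫_{Ω̄} Z(θ,ω) μ(dθ,dω) = E^P[Z(τ(ω),ω)]. -/

import Mathlib

open MeasureTheory Set Filter Topology
open scoped ENNReal

noncomputable section

/-- `ℝ^d`. -/
abbrev Eucl (d : ℕ) : Type := EuclideanSpace ℝ (Fin d)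

/-- A function indexed by a linearly ordered topological space is càdlàg if it is
right-continuous at every point and has left limits at every point. -/
def Cadlag {α : Type*} [TopologicalSpace α] [LinearOrder α] {β : Type*} [TopologicalSpace β]
    (f : α → β) : Prop :=
  (∀ t : α, Tendsto f (𝓝[>] t) (𝓝 (f t))) ∧ (∀ t : α, ∃ L : β, Tendsto f (𝓝[<] t) (𝓝 L))

/-- The canonical path space `Ω`: càdlàg paths `ω : [0,1] → ℝ^d`. -/
def PathSpace (d : ℕ) : Type := {ω : unitInterval → Eucl d // Cadlag ω}

/-- The canonical filtration `ℱ_t := σ(X_s : s ≤ t)` on the path space. -/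
def pathF (d : ℕ) (t : unitInterval) : MeasurableSpace (PathSpace d) :=
  ⨆ s : unitInterval, ⨆ _ : s ≤ t, MeasurableSpace.comap (fun ω : PathSpace d => ω.1 s) inferInstance

/-- The σ-algebra `ℱ_1` on `Ω`. -/
instance instMSPathSpace (d : ℕ) : MeasurableSpace (PathSpace d) := pathF d 1

/-- Lebesgue measure `λ` on `[0,1]`. -/
def lebI : Measure unitInterval := (volume : Measure ℝ).comap Subtype.val

/-- `X` is a square-integrable martingale under `P` (w.r.t. the canonical filtration):
`E^P‖X_t‖² < ∞` for all `t` and `E^P[X_t | ℱ_s] = X_s` `P`-a.s. for all `s ≤ t`. -/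
def IsSqIntMart (d : ℕ) (P : Measure (PathSpace d)) : Prop :=
  (∀ t : unitInterval, Integrable (fun ω : PathSpace d => ‖ω.1 t‖ ^ 2) P) ∧
  (∀ s t : unitInterval, s ≤ t →
    (fun ω : PathSpace d => ω.1 s) =ᵐ[P] P[fun ω : PathSpace d => ω.1 t | pathF d s])

/-- `𝒬`: probability measures on `(Ω, ℱ_1)` under which `X` is a square-integrable martingale. -/
def QSet (d : ℕ) : Set (Measure (PathSpace d)) :=
  {P | IsProbabilityMeasure P ∧ IsSqIntMart d P}

lemma cadlag_stop {d : ℕ} (ω : PathSpace d) (t : unitInterval) :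
    Cadlag (fun s => ω.1 (min s t)) := by
  constructor
  · intro s
    rcases le_or_gt t s with h | h
    · have hev : ∀ᶠ s' in 𝓝[>] s, ω.1 (min s' t) = ω.1 (min s t) := by
        filter_upwards [self_mem_nhdsWithin] with s' hs'
        have h1 : min s' t = t := min_eq_right (le_of_lt (lt_of_le_of_lt h hs'))
        have h2 : min s t = t := min_eq_right h
        rw [h1, h2]
      exact Tendsto.congr' (by filter_upwards [hev] with a ha using ha.symm) tendsto_const_nhds
    · have hmem : Iio t ∈ 𝓝[>] s := nhdsWithin_le_nhds (Iio_mem_nhds h)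
      have hev : ∀ᶠ s' in 𝓝[>] s, ω.1 s' = ω.1 (min s' t) := by
        filter_upwards [hmem] with s' hs'
        rw [min_eq_left (le_of_lt hs')]
      have hmin : min s t = s := min_eq_left h.le
      refine Tendsto.congr' hev ?_
      show Tendsto (fun s' => ω.1 s') (𝓝[>] s) (𝓝 (ω.1 (min s t)))
      rw [hmin]
      exact ω.2.1 s
  · intro s
    rcases le_or_gt s t with h | h
    · obtain ⟨L, hL⟩ := ω.2.2 s
      refine ⟨L, ?_⟩
      have hev : ∀ᶠ s' in 𝓝[<] s, ω.1 s' = ω.1 (min s' t) := by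
        filter_upwards [self_mem_nhdsWithin] with s' hs'
        rw [min_eq_left (le_of_lt (lt_of_lt_of_le hs' h))]
      exact Tendsto.congr' hev hL
    · refine ⟨ω.1 t, ?_⟩
      have hmem : Ioi t ∈ 𝓝[<] s := nhdsWithin_le_nhds (Ioi_mem_nhds h)
      have hev : ∀ᶠ s' in 𝓝[<] s, ω.1 (min s' t) = ω.1 t := by
        filter_upwards [hmem] with s' hs'
        rw [min_eq_right (le_of_lt hs')]
      exact Tendsto.congr' (by filter_upwards [hev] with a ha using ha.symm) tendsto_const_nhds

/-- The stopped path `ω_{·∧t}`. -/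
def stopPath {d : ℕ} (ω : PathSpace d) (t : unitInterval) : PathSpace d :=
  ⟨fun s => ω.1 (min s t), cadlag_stop ω t⟩

/-- A set `E₂ ⊆ [0,1] × Ω` is non-anticipative if `(t,ω) ∈ E₂ ⇔ (t, ω_{·∧t}) ∈ E₂`. -/
def NonAnticipativeSet {d : ℕ} (E₂ : Set (unitInterval × PathSpace d)) : Prop :=
  ∀ p : unitInterval × PathSpace d, p ∈ E₂ ↔ (p.1, stopPath p.2 p.1) ∈ E₂

/-- A function `Z` on `[0,1] × Ω` is non-anticipative if `Z(t,ω) = Z(t, ω_{·∧t})`. -/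
def NonAnticipativeFun {d : ℕ} (Z : unitInterval × PathSpace d → ℝ) : Prop :=
  ∀ p : unitInterval × PathSpace d, Z p = Z (p.1, stopPath p.2 p.1)

/-- The enlarged space `Ω̄ := [0,1] × Ω`. -/
abbrev OmegaBar (d : ℕ) : Type := unitInterval × PathSpace d

/-- The enlarged filtration `ℱ̄_t := σ((θ,ω) ↦ θ∧t) ∨ σ((θ,ω) ↦ ω(s) : s ≤ t)`. -/
def barF (d : ℕ) (t : unitInterval) : MeasurableSpace (OmegaBar d) :=
  MeasurableSpace.comap (fun p : OmegaBar d => min p.1 t) inferInstance ⊔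
  ⨆ s : unitInterval, ⨆ _ : s ≤ t,
    MeasurableSpace.comap (fun p : OmegaBar d => p.2.1 s) inferInstance

/-- `(θ,ω) ↦ X_t(ω)` is a square-integrable martingale w.r.t. `(ℱ̄_t)` under `μ`. -/
def IsSqIntMartBar (d : ℕ) (μ : Measure (OmegaBar d)) : Prop :=
  (∀ t : unitInterval, Integrable (fun p : OmegaBar d => ‖p.2.1 t‖ ^ 2) μ) ∧
  (∀ s t : unitInterval, s ≤ t →
    (fun p : OmegaBar d => p.2.1 s) =ᵐ[μ] μ[fun p : OmegaBar d => p.2.1 t | barF d s])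

/-- `𝒬̄`: probability measures on `Ω̄` under which `X` is a square-integrable `ℱ̄`-martingale. -/
def QBar (d : ℕ) : Set (Measure (OmegaBar d)) :=
  {μ | IsProbabilityMeasure μ ∧ IsSqIntMartBar d μ}

/-- `𝒬^E`. -/
def QE (d : ℕ) (E₁ : Set (PathSpace d)) (E₂ : Set (unitInterval × PathSpace d)) :
    Set (Measure (PathSpace d)) :=
  {P | P ∈ QSet d ∧ P E₁ = 1 ∧ (lebI.prod P) E₂ = 1}

/-- `𝒬̄^E`. -/
def QEBar (d : ℕ) (E₁ : Set (PathSpace d)) (E₂ : Set (unitInterval × PathSpace d)) :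
    Set (Measure (OmegaBar d)) :=
  {μ | μ ∈ QBar d ∧ μ (univ ×ˢ E₁) = 1 ∧
    (lebI.prod μ) {q : unitInterval × OmegaBar d | (q.1, q.2.2) ∈ E₂} = 1}

/-- The augmented filtration `ℱ^P_t := ℱ_t ∨ σ(P-null sets of ℱ_1)`. -/
def augF (d : ℕ) (P : Measure (PathSpace d)) (t : unitInterval) :
    MeasurableSpace (PathSpace d) :=
  pathF d t ⊔ MeasurableSpace.generateFrom {N : Set (PathSpace d) | P N = 0}

/-- `τ` is a `[0,1]`-valued `𝔽^P`-stopping time. -/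
def IsStopTime (d : ℕ) (P : Measure (PathSpace d)) (τ : PathSpace d → unitInterval) : Prop :=
  ∀ t : unitInterval, MeasurableSet[augF d P t] {ω : PathSpace d | τ ω ≤ t}

/-- `Z : [0,1] × Ω → ℝ` is `𝔽`-progressively measurable: for each `t ∈ [0,1]` the restriction
of `Z` to `[0,t] × Ω` is `Borel([0,t]) ⊗ ℱ_t`-measurable. -/
def ProgMeas {d : ℕ} (Z : unitInterval × PathSpace d → ℝ) : Prop :=
  ∀ t : unitInterval,
    @Measurable ({s : unitInterval // s ≤ t} × PathSpace d) ℝ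
      (@Prod.instMeasurableSpace _ _ inferInstance (pathF d t)) _
      (fun q => Z (q.1.1, q.2))

/-- `ψ : [0,1] × Ω → ℝ` is `𝔽^P`-progressively measurable. -/
def ProgMeasAug {d : ℕ} (P : Measure (PathSpace d)) (ψ : unitInterval × PathSpace d → ℝ) : Prop :=
  ∀ t : unitInterval,
    @Measurable ({s : unitInterval // s ≤ t} × PathSpace d) ℝ
      (@Prod.instMeasurableSpace _ _ inferInstance (augF d P t)) _
      (fun q => ψ (q.1.1, q.2))

/-- The integral of `f` against `P` with values in `EReal` (allowed to be `±∞`). -/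
def intE {α : Type*} [MeasurableSpace α] (P : Measure α) (f : α → ℝ) : EReal :=
  ((∫⁻ a, ENNReal.ofReal (f a) ∂P : ℝ≥0∞) : EReal) -
    ((∫⁻ a, ENNReal.ofReal (-(f a)) ∂P : ℝ≥0∞) : EReal)

/-- `μ` is `ε`-modified: `μ({1}×Γ) ≥ ε·μ^Ω(Γ)` for all `Γ ∈ ℱ_1`. -/
def EpsModified {d : ℕ} (ε : ℝ) (μ : Measure (OmegaBar d)) : Prop :=
  ∀ Γ : Set (PathSpace d), MeasurableSet[pathF d 1] Γ →
    ENNReal.ofReal ε * (μ.map Prod.snd) Γ ≤ μ ({(1 : unitInterval)} ×ˢ Γ)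


section Helpers

open MeasurableSpace

variable {d : ℕ}

lemma pathF_mono {s t : unitInterval} (h : s ≤ t) : pathF d s ≤ pathF d t :=
  iSup₂_le fun r hr => le_iSup₂_of_le r (hr.trans h) le_rfl

lemma measurable_eval {r s : unitInterval} (h : r ≤ s) :
    Measurable[pathF d s] (fun ω : PathSpace d => ω.1 r) :=
  Measurable.of_comap_le (le_iSup₂_of_le r h le_rfl)

lemma augF_mono (P : Measure (PathSpace d)) {s t : unitInterval} (h : s ≤ t) :
    augF d P s ≤ augF d P t :=
  sup_le_sup_right (pathF_mono h) _

/-- The σ-algebra of sets that agree a.e. with a set in `m`. -/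
def aeMS (P : Measure (PathSpace d)) (m : MeasurableSpace (PathSpace d)) :
    MeasurableSpace (PathSpace d) where
  MeasurableSet' B := ∃ A, MeasurableSet[m] A ∧ B =ᵐ[P] A
  measurableSet_empty := ⟨∅, @MeasurableSet.empty _ m, Filter.EventuallyEq.rfl⟩
  measurableSet_compl := by
    rintro B ⟨A, hA, hBA⟩
    exact ⟨Aᶜ, hA.compl, hBA.mono fun x hx => congrArg Not hx⟩
  measurableSet_iUnion := by
    intro f hf
    choose A hA hAe using hf
    refine ⟨⋃ i, A i, MeasurableSpace.measurableSet_iUnion _ _ hA, ?_⟩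
    filter_upwards [MeasureTheory.ae_all_iff.mpr hAe] with x hx
    rw [eq_iff_iff]
    constructor
    · intro hxu
      obtain ⟨i, hi⟩ := Set.mem_iUnion.1 hxu
      exact Set.mem_iUnion.2 ⟨i, cast (hx i) hi⟩
    · intro hxu
      obtain ⟨i, hi⟩ := Set.mem_iUnion.1 hxu
      exact Set.mem_iUnion.2 ⟨i, cast (hx i).symm hi⟩

lemma le_aeMS (P : Measure (PathSpace d)) (m : MeasurableSpace (PathSpace d)) :
    m ≤ aeMS P m :=
  fun s hs => ⟨s, hs, Filter.EventuallyEq.rfl⟩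

lemma augF_le_aeMS (P : Measure (PathSpace d)) {u s : unitInterval} (hu : u ≤ s) :
    augF d P u ≤ aeMS P (pathF d s) :=
  sup_le ((pathF_mono hu).trans (le_aeMS P _))
    (MeasurableSpace.generateFrom_le fun N hN =>
      ⟨∅, @MeasurableSet.empty _ (pathF d s), (MeasureTheory.ae_eq_empty).mpr hN⟩)

/-- The σ-algebra of `P`-null measurable sets. -/
def nullMS (P : Measure (PathSpace d)) : MeasurableSpace (PathSpace d) where
  MeasurableSet' s := MeasureTheory.NullMeasurableSet s P
  measurableSet_empty := MeasurableSet.empty.nullMeasurableSet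
  measurableSet_compl _ h := h.compl
  measurableSet_iUnion _ h := MeasureTheory.NullMeasurableSet.iUnion h

lemma augF_le_nullMS (P : Measure (PathSpace d)) (u : unitInterval) :
    augF d P u ≤ nullMS P :=
  sup_le ((pathF_mono unitInterval.le_one').trans
      (fun s hs => MeasurableSet.nullMeasurableSet hs))
    (MeasurableSpace.generateFrom_le fun N hN =>
      MeasureTheory.NullMeasurableSet.of_null hN)

lemma measurable_min_tau (P : Measure (PathSpace d)) (τ : PathSpace d → unitInterval)
    (hτ : IsStopTime d P τ) {m : MeasurableSpace (PathSpace d)} {s : unitInterval}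
    (hle : ∀ u : unitInterval, u ≤ s → augF d P u ≤ m) :
    Measurable[m] (fun ω => min (τ ω) s) := by
  refine measurable_of_Iic fun u => ?_
  rcases le_or_gt s u with h | h
  · have : (fun ω : PathSpace d => min (τ ω) s) ⁻¹' Set.Iic u = Set.univ := by
      ext ω; simp only [Set.mem_preimage, Set.mem_Iic, Set.mem_univ, iff_true]
      exact min_le_of_right_le h
    rw [this]; exact MeasurableSet.univ
  · have : (fun ω : PathSpace d => min (τ ω) s) ⁻¹' Set.Iic u = {ω | τ ω ≤ u} := by
      ext ω
      simp only [Set.mem_preimage, Set.mem_Iic, min_le_iff, Set.mem_setOf_eq]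
      exact ⟨fun hh => hh.resolve_right (not_le.mpr h), Or.inl⟩
    rw [this]; exact hle u h.le _ (hτ u)

lemma aemeasurable_tau (P : Measure (PathSpace d)) (τ : PathSpace d → unitInterval)
    (hτ : IsStopTime d P τ) : AEMeasurable τ P := by
  have h1 : Measurable[nullMS P] (fun ω => min (τ ω) 1) :=
    measurable_min_tau P τ hτ (fun u _ => augF_le_nullMS P u)
  have h2 : Measurable[nullMS P] τ := by
    have : (fun ω : PathSpace d => min (τ ω) 1) = τ := by
      funext ω; exact min_eq_left unitInterval.le_one'
    rwa [this] at h1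
  exact MeasureTheory.NullMeasurable.aemeasurable (fun S hS => h2 hS)

lemma barF_le (s : unitInterval) :
    barF d s ≤ (inferInstance : MeasurableSpace (OmegaBar d)) :=
  sup_le (Measurable.comap_le (measurable_fst.min measurable_const))
    (iSup₂_le fun r _ => Measurable.comap_le
      (((measurable_eval unitInterval.le_one').comp measurable_snd)))

lemma measurable_barF_eval {r s : unitInterval} (h : r ≤ s) :
    Measurable[barF d s] (fun p : OmegaBar d => p.2.1 r) :=
  Measurable.of_comap_le (le_sup_of_le_right (le_iSup₂_of_le r h le_rfl))

lemma measurable_graph_aeMS (P : Measure (PathSpace d)) (τ : PathSpace d → unitInterval)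
    (hτ : IsStopTime d P τ) (s : unitInterval) :
    @Measurable (PathSpace d) (OmegaBar d) (aeMS P (pathF d s)) (barF d s)
      (fun ω => (τ ω, ω)) := by
  rw [measurable_iff_comap_le, barF, MeasurableSpace.comap_sup]
  refine sup_le ?_ ?_
  · rw [MeasurableSpace.comap_comp]
    exact Measurable.comap_le
      (measurable_min_tau P τ hτ (fun u hu => augF_le_aeMS P hu))
  · simp_rw [MeasurableSpace.comap_iSup, MeasurableSpace.comap_comp]
    refine iSup₂_le fun r hr => ?_
    exact Measurable.comap_le ((measurable_eval hr).mono (le_aeMS P _) le_rfl)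

lemma integrable_eval {P : Measure (PathSpace d)} [MeasureTheory.IsFiniteMeasure P]
    (t : unitInterval)
    (h2 : MeasureTheory.Integrable (fun ω : PathSpace d => ‖ω.1 t‖ ^ 2) P) :
    MeasureTheory.Integrable (fun ω : PathSpace d => ω.1 t) P := by
  refine MeasureTheory.Integrable.mono'
    ((MeasureTheory.integrable_const (1 : ℝ)).add h2)
    ((measurable_eval unitInterval.le_one').stronglyMeasurable.aestronglyMeasurable) ?_
  filter_upwards with ω
  have h := norm_nonneg (ω.1 t)
  have h' := sq_nonneg (‖ω.1 t‖ - 1)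
  simp only [Pi.add_apply]
  nlinarith

end Helpers

/-- the pushforward `μ` of `P ∈ 𝒬^E` under `ω ↦ (τ(ω), ω)`, for an
`𝔽^P`-stopping time `τ`, belongs to `𝒬̄^E`, and for every measurable non-anticipative `Z`
bounded from below, `∫_{Ω̄} Z dμ = E^P[Z(τ(ω),ω)]`. -/
theorem pushforward_graph_mem_QEBar (d : ℕ) (hd : 1 ≤ d)
    (E₁ : Set (PathSpace d)) (hE₁ : MeasurableSet[pathF d 1] E₁)
    (E₂ : Set (unitInterval × PathSpace d)) (hE₂ : MeasurableSet E₂)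
    (hE₂na : NonAnticipativeSet E₂)
    (P : Measure (PathSpace d)) (hP : P ∈ QE d E₁ E₂)
    (τ : PathSpace d → unitInterval) (hτ : IsStopTime d P τ) :
    P.map (fun ω => (τ ω, ω)) ∈ QEBar d E₁ E₂ ∧
    ∀ Z : unitInterval × PathSpace d → ℝ, Measurable Z → NonAnticipativeFun Z →
      (∃ c : ℝ, ∀ p, c ≤ Z p) →
      intE (P.map (fun ω => (τ ω, ω))) Z = intE P (fun ω => Z (τ ω, ω)) := by
  obtain ⟨⟨hPprob, hPint, hPmart⟩, hPE1, hPE2⟩ := hP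
  haveI : IsProbabilityMeasure P := hPprob
  set g : PathSpace d → OmegaBar d := fun ω => (τ ω, ω) with hg_def
  have hτae : AEMeasurable τ P := aemeasurable_tau P τ hτ
  have hgae : AEMeasurable g P := hτae.prodMk aemeasurable_id
  set μ : Measure (OmegaBar d) := P.map g with hμ_def
  haveI hμprob : IsProbabilityMeasure μ := Measure.isProbabilityMeasure_map hgae
  -- measurability of evaluation maps on the enlarged space
  have hev : ∀ t : unitInterval, Measurable (fun p : OmegaBar d => p.2.1 t) :=
    fun t => (measurable_eval unitInterval.le_one').comp measurable_snd
  -- integrability of the squared norms under μ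
  have hμint : ∀ t : unitInterval,
      Integrable (fun p : OmegaBar d => ‖p.2.1 t‖ ^ 2) μ := by
    intro t
    have hm : Measurable (fun p : OmegaBar d => ‖p.2.1 t‖ ^ 2) :=
      ((hev t).norm.pow_const 2)
    exact (integrable_map_measure hm.aestronglyMeasurable hgae).mpr (hPint t)
  -- integrability of the evaluations under P and μ
  have hXint : ∀ t : unitInterval, Integrable (fun ω : PathSpace d => ω.1 t) P :=
    fun t => integrable_eval t (hPint t)
  have hXint' : ∀ t : unitInterval, Integrable (fun p : OmegaBar d => p.2.1 t) μ := by
    intro t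
    exact (integrable_map_measure (hev t).stronglyMeasurable.aestronglyMeasurable
        hgae).mpr (hXint t)
  -- the martingale property on the enlarged space
  have hmart : ∀ s t : unitInterval, s ≤ t →
      (fun p : OmegaBar d => p.2.1 s) =ᵐ[μ] μ[fun p : OmegaBar d => p.2.1 t | barF d s] := by
    intro s t hst
    have hms : pathF d s ≤ instMSPathSpace d := pathF_mono unitInterval.le_one'
    haveI : SigmaFinite (P.trim hms) := inferInstance
    haveI : SigmaFinite (μ.trim (barF_le s)) := inferInstance
    refine ae_eq_condExp_of_forall_setIntegral_eq (barF_le s) (hXint' t)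
      (fun A _ _ => (hXint' s).integrableOn) ?_ ?_
    · intro A hA _
      have hAmeas : MeasurableSet A := barF_le s A hA
      have hB : MeasurableSet[aeMS P (pathF d s)] (g ⁻¹' A) :=
        measurable_graph_aeMS P τ hτ s hA
      obtain ⟨A', hA'm, hae⟩ := hB
      have e1 : ∫ p in A, p.2.1 s ∂μ = ∫ ω in g ⁻¹' A, ω.1 s ∂P :=
        setIntegral_map hAmeas
          (hev s).stronglyMeasurable.aestronglyMeasurable hgae
      have e2 : ∫ p in A, p.2.1 t ∂μ = ∫ ω in g ⁻¹' A, ω.1 t ∂P :=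
        setIntegral_map hAmeas
          (hev t).stronglyMeasurable.aestronglyMeasurable hgae
      rw [e1, e2, setIntegral_congr_set hae,
        setIntegral_congr_set (f := fun ω : PathSpace d => ω.1 t) hae]
      have e3 : ∫ ω in A', ω.1 s ∂P
          = ∫ ω in A', (P[fun ω : PathSpace d => ω.1 t | pathF d s]) ω ∂P :=
        integral_congr_ae (ae_restrict_of_ae (hPmart s t hst))
      rw [e3, setIntegral_condExp hms (hXint t) hA'm]
    · exact StronglyMeasurable.aestronglyMeasurable
        ((measurable_barF_eval (le_refl s)).stronglyMeasurable)
  refine ⟨⟨⟨hμprob, hμint, hmart⟩, ?_, ?_⟩, ?_⟩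
  · -- μ (univ ×ˢ E₁) = 1
    have h1 : MeasurableSet ((univ : Set unitInterval) ×ˢ E₁) :=
      MeasurableSet.univ.prod hE₁
    rw [hμ_def, Measure.map_apply_of_aemeasurable hgae h1]
    have : g ⁻¹' ((univ : Set unitInterval) ×ˢ E₁) = E₁ := by
      ext ω; simp [hg_def]
    rw [this, hPE1]
  · -- the E₂ condition
    haveI : IsFiniteMeasure lebI := by
      constructor
      rw [lebI, MeasurableEmbedding.comap_apply
        (MeasurableEmbedding.subtype_coe measurableSet_Icc)]
      rw [Subtype.coe_image_univ]
      simp [unitInterval]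
    have hsnd : μ.map Prod.snd = P := by
      rw [hμ_def, AEMeasurable.map_map_of_aemeasurable measurable_snd.aemeasurable hgae]
      have : Prod.snd ∘ g = id := rfl
      rw [this, Measure.map_id]
    have hprod : (lebI.prod μ).map (Prod.map id Prod.snd) = lebI.prod P := by
      rw [← Measure.map_prod_map lebI μ measurable_id measurable_snd,
        Measure.map_id, hsnd]
    have hset : {q : unitInterval × OmegaBar d | (q.1, q.2.2) ∈ E₂}
        = (Prod.map id Prod.snd) ⁻¹' E₂ := rfl
    rw [hset, ← Measure.map_apply (measurable_id.prodMap measurable_snd) hE₂, hprod]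
    exact hPE2
  · -- value of the integral
    intro Z hZ _ _
    have h1 : ∫⁻ p, ENNReal.ofReal (Z p) ∂μ = ∫⁻ ω, ENNReal.ofReal (Z (g ω)) ∂P :=
      lintegral_map' (ENNReal.measurable_ofReal.comp hZ).aemeasurable hgae
    have h2 : ∫⁻ p, ENNReal.ofReal (-(Z p)) ∂μ = ∫⁻ ω, ENNReal.ofReal (-(Z (g ω))) ∂P :=
      lintegral_map' (ENNReal.measurable_ofReal.comp hZ.neg).aemeasurable hgae
    simp only [intE, h1, h2]
    rfl

end
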